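/- Let V̂ ∈ C¹(Ω) with V̂(0)=0 and let φ(t,x) be the flow of ẋ = f(x) on a forward-invariant Ω with φ(t,x) → 0 and V̂(φ(T,x)) → 0 as T → ∞. If V(x) := ∫₀^∞ ω(φ(t,x)) dt converges and r(x) := DV̂(x)·f(x) + ω(x) is integrable along trajectories, then V(x) − V̂(x) = ∫₀^∞ r(φ(t,x)) dt for all x ∈ Ω (the error representation identity). -/

import Mathlib

open MeasureTheory Filter Topology

set_option maxHeartbeats 1000000

/-- Error representation identity for the Lyapunov PDE:
`V x - V̂ x = ∫₀^∞ r (φ t x) dt` where `r x = DV̂ x (f x) + ω x`. -/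
theorem lyapunov_error_representation
    {n : ℕ}
    (f : EuclideanSpace ℝ (Fin n) → EuclideanSpace ℝ (Fin n))
    (φ : ℝ → EuclideanSpace ℝ (Fin n) → EuclideanSpace ℝ (Fin n))
    (Ω : Set (EuclideanSpace ℝ (Fin n)))
    (ω : EuclideanSpace ℝ (Fin n) → ℝ)
    (Vhat : EuclideanSpace ℝ (Fin n) → ℝ)
    (DVhat : EuclideanSpace ℝ (Fin n) → EuclideanSpace ℝ (Fin n) →L[ℝ] ℝ)
    (h0Ω : (0 : EuclideanSpace ℝ (Fin n)) ∈ Ω)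
    (hφ0 : ∀ x ∈ Ω, φ 0 x = x)
    (hinv : ∀ x ∈ Ω, ∀ t : ℝ, 0 ≤ t → φ t x ∈ Ω)
    (hflow : ∀ x ∈ Ω, ∀ t : ℝ, 0 ≤ t → HasDerivAt (fun s => φ s x) (f (φ t x)) t)
    (hlim : ∀ x ∈ Ω, Tendsto (fun t => φ t x) atTop (𝓝 0))
    (hωcont : Continuous ω)
    (hωnn : ∀ x, 0 ≤ ω x)
    (hint : ∀ x ∈ Ω, IntegrableOn (fun t => ω (φ t x)) (Set.Ioi (0:ℝ)))
    (V : EuclideanSpace ℝ (Fin n) → ℝ)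
    (hV : ∀ x, V x = ∫ t in Set.Ioi (0:ℝ), ω (φ t x))
    (hC1 : ∀ x ∈ Ω, HasFDerivAt Vhat (DVhat x) x)
    (hDVcont : ContinuousOn DVhat Ω)
    (hVhat0 : Vhat 0 = 0)
    (hVhatlim : ∀ x ∈ Ω, Tendsto (fun T => Vhat (φ T x)) atTop (𝓝 0))
    (hrint : ∀ x ∈ Ω,
      IntegrableOn (fun t => DVhat (φ t x) (f (φ t x)) + ω (φ t x)) (Set.Ioi (0:ℝ))) :
    ∀ x ∈ Ω, V x - Vhat x =
      ∫ t in Set.Ioi (0:ℝ), (DVhat (φ t x) (f (φ t x)) + ω (φ t x)) := by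
  intro x hx
  set g : ℝ → ℝ := fun t => DVhat (φ t x) (f (φ t x)) with hg
  -- g is integrable on Ioi 0
  have hgint : IntegrableOn g (Set.Ioi (0:ℝ)) := by
    have := (hrint x hx).sub (hint x hx)
    simpa [hg, Pi.sub_def] using this
  -- derivative of Vhat ∘ φ
  have hderiv : ∀ t : ℝ, 0 ≤ t → HasDerivAt (fun s => Vhat (φ s x)) (g t) t := by
    intro t ht
    exact (hC1 _ (hinv x hx t ht)).comp_hasDerivAt t (hflow x hx t ht)
  -- FTC on [0,T]
  have hFTC : ∀ T : ℝ, 0 ≤ T →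
      (∫ t in (0:ℝ)..T, g t) = Vhat (φ T x) - Vhat (φ 0 x) := by
    intro T hT
    have hsub : Set.uIoc (0:ℝ) T ⊆ Set.Ioi 0 := by
      rw [Set.uIoc_of_le hT]; exact Set.Ioc_subset_Ioi_self
    have hd : ∀ t ∈ Set.uIcc (0:ℝ) T, HasDerivAt (fun s => Vhat (φ s x)) (g t) t := by
      intro t htmem
      have : t ∈ Set.Icc (0:ℝ) T := by rwa [Set.uIcc_of_le hT] at htmem
      exact hderiv t this.1
    have hi : IntervalIntegrable g volume 0 T := by
      rw [intervalIntegrable_iff]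
      exact hgint.mono_set hsub
    exact intervalIntegral.integral_eq_sub_of_hasDerivAt hd hi
  -- ∫ g over Ioi 0 = - Vhat x
  have hlim1 : Tendsto (fun T => ∫ t in (0:ℝ)..T, g t) atTop
      (𝓝 (∫ t in Set.Ioi (0:ℝ), g t)) :=
    intervalIntegral_tendsto_integral_Ioi 0 hgint tendsto_id
  have hlim2 : Tendsto (fun T => ∫ t in (0:ℝ)..T, g t) atTop (𝓝 (0 - Vhat x)) := by
    have heq : ∀ᶠ T in atTop, Vhat (φ T x) - Vhat x = (∫ t in (0:ℝ)..T, g t) := by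
      filter_upwards [eventually_ge_atTop (0:ℝ)] with T hT
      rw [hFTC T hT, hφ0 x hx]
    exact Tendsto.congr' heq ((hVhatlim x hx).sub_const (Vhat x))
  have hgval : (∫ t in Set.Ioi (0:ℝ), g t) = - Vhat x := by
    have := tendsto_nhds_unique hlim1 hlim2
    simpa using this
  have hsplit : (∫ t in Set.Ioi (0:ℝ), (DVhat (φ t x) (f (φ t x)) + ω (φ t x)))
      = (∫ t in Set.Ioi (0:ℝ), g t) + ∫ t in Set.Ioi (0:ℝ), ω (φ t x) := by
    exact integral_add (by simpa [hg, Pi.sub_def, IntegrableOn] using (hrint x hx).sub (hint x hx)) (hint x hx)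
  rw [hsplit, hgval, hV x]
  ring
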